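/- Let G(x,ς) := (1/(ς√(2π))) exp{x − d₊(x,ς)²/2} with d₊(x,ς) = x/ς + ς/2. Then for every n ∈ ℕ there exists a constant Cₙ > 0, independent of x and ς, such that |∂ₓⁿG(x,ς)| ≤ Cₙ/ς^{n+1} for all x ∈ ℝ and ς > 0. -/

import Mathlib

/-- `G(x,ς) = exp{x − d₊(x,ς)²/2}/(ς√(2π))` with `d₊(x,ς) = x/ς + ς/2`. -/
noncomputable def GATM (ς x : ℝ) : ℝ :=
  Real.exp (x - (x/ς + ς/2)^2/2) / (ς * Real.sqrt (2*Real.pi))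

open Real Filter Polynomial

noncomputable def gphi : ℝ → ℝ := fun y => Real.exp (-(y^2/2))

lemma contDiff_gphi : ContDiff ℝ ⊤ gphi :=
  Real.contDiff_exp.comp (((contDiff_id.pow 2).div_const 2).neg)

lemma hasDerivAt_gphi (y : ℝ) : HasDerivAt gphi (-y * gphi y) y := by
  have h : HasDerivAt (fun x : ℝ => -(x^2/2)) (-y) y := by
    have h0 : HasDerivAt (fun x : ℝ => x^2/2) y y := by
      simpa using (hasDerivAt_pow 2 y).div_const 2
    exact h0.neg
  rw [show gphi = fun y => Real.exp (-(y^2/2)) from rfl]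
  simpa [gphi, mul_comm] using h.exp

lemma iteratedDeriv_gphi (n : ℕ) :
    ∃ P : ℝ[X], iteratedDeriv n gphi = fun y => P.eval y * gphi y := by
  induction n with
  | zero => exact ⟨1, by simp [iteratedDeriv_zero]⟩
  | succ n ih =>
    obtain ⟨P, hP⟩ := ih
    refine ⟨derivative P - P * X, ?_⟩
    funext y
    rw [iteratedDeriv_succ, hP]
    have h2 : HasDerivAt (fun y => P.eval y * gphi y)
        ((derivative P).eval y * gphi y + P.eval y * (-y * gphi y)) y :=
      (P.hasDerivAt y).mul (hasDerivAt_gphi y)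
    rw [h2.deriv]
    simp only [eval_sub, eval_mul, eval_X]
    ring

lemma tendsto_poly_gphi_atTop (P : ℝ[X]) :
    Tendsto (fun y => P.eval y * gphi y) atTop (nhds 0) := by
  have hg : Tendsto (fun y => |P.eval y / Real.exp y|) atTop (nhds 0) := by
    simpa using (P.tendsto_div_exp_atTop).abs
  apply squeeze_zero_norm' ?_ hg
  filter_upwards [eventually_ge_atTop (2 : ℝ)] with y hy
  have h1 : gphi y ≤ Real.exp (-y) := by
    apply Real.exp_le_exp.2
    nlinarith
  have h2 : (0:ℝ) < gphi y := Real.exp_pos _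
  have : ‖P.eval y * gphi y‖ = |P.eval y| * gphi y := by
    rw [Real.norm_eq_abs, abs_mul, abs_of_pos h2]
  rw [this, abs_div, abs_of_pos (Real.exp_pos y), div_eq_mul_inv, ← Real.exp_neg]
  exact mul_le_mul_of_nonneg_left h1 (abs_nonneg _)

lemma gphi_neg (y : ℝ) : gphi (-y) = gphi y := by simp [gphi]

lemma tendsto_poly_gphi_atBot (P : ℝ[X]) :
    Tendsto (fun y => P.eval y * gphi y) atBot (nhds 0) := by
  have h := (tendsto_poly_gphi_atTop (P.comp (-X))).comp tendsto_neg_atBot_atTop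
  convert h using 2 with y
  simp [Function.comp, gphi_neg, eval_comp]

lemma bdd_gphi (n : ℕ) : ∃ C : ℝ, 0 < C ∧ ∀ y, |iteratedDeriv n gphi y| ≤ C := by
  obtain ⟨P, hP⟩ := iteratedDeriv_gphi n
  set f : ℝ → ℝ := fun y => P.eval y * gphi y with hf
  have hc : Continuous f :=
    P.continuous.mul (Real.continuous_exp.comp (((continuous_id.pow 2).div_const 2).neg))
  have ht : Tendsto f (Filter.cocompact ℝ) (nhds 0) := by
    rw [cocompact_eq_atBot_atTop]
    exact Filter.Tendsto.sup (tendsto_poly_gphi_atBot P) (tendsto_poly_gphi_atTop P)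
  obtain ⟨K, hK, hKs⟩ := Filter.mem_cocompact.mp (ht (Metric.ball_mem_nhds (0:ℝ) one_pos))
  obtain ⟨C0, hC0⟩ := hK.exists_bound_of_continuousOn hc.continuousOn
  refine ⟨max C0 1, lt_of_lt_of_le one_pos (le_max_right _ _), fun y => ?_⟩
  rw [hP]
  by_cases hy : y ∈ K
  · have := hC0 y hy
    rw [Real.norm_eq_abs] at this
    exact this.trans (le_max_left _ _)
  · have := hKs hy
    simp only [Set.mem_preimage, Metric.mem_ball, dist_zero_right, Real.norm_eq_abs] at this
    exact (le_of_lt this).trans (le_max_right _ _)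

theorem stmt_9 (n : ℕ) :
    ∃ C : ℝ, 0 < C ∧ ∀ ς x : ℝ, 0 < ς →
      |iteratedDeriv n (fun x' => GATM ς x') x| ≤ C / ς^(n+1) := by
  obtain ⟨C, hC, hCb⟩ := bdd_gphi n
  refine ⟨C, hC, fun ς x hς => ?_⟩
  have hςne : ς ≠ 0 := ne_of_gt hς
  set c : ℝ := (ς * Real.sqrt (2*Real.pi))⁻¹ with hc
  set h : ℝ → ℝ := fun y => gphi (y + -(ς/2)) with hh
  have hcont : ContDiff ℝ (n : ℕ∞) h :=
    (contDiff_gphi.of_le le_top).comp (contDiff_id.add contDiff_const)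
  have hkey : (fun x' => GATM ς x') = c • (fun x' => h (ς⁻¹ * x')) := by
    funext x'
    simp only [Pi.smul_apply, smul_eq_mul, hh, hc, GATM, gphi]
    rw [div_eq_inv_mul]
    congr 1
    rw [Real.exp_eq_exp]
    field_simp
    ring
  have hinner : ContDiff ℝ (n : ℕ∞) (fun x' => h (ς⁻¹ * x')) :=
    hcont.comp (contDiff_const.mul contDiff_id)
  rw [hkey, ← iteratedDerivWithin_univ,
    iteratedDerivWithin_const_smul (Set.mem_univ x) uniqueDiffOn_univ c hinner.contDiffWithinAt,
    iteratedDerivWithin_univ, iteratedDeriv_comp_const_smul hcont ς⁻¹]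
  have hshift : iteratedDeriv n h (ς⁻¹ * x)
      = iteratedDeriv n gphi (ς⁻¹ * x + -(ς/2)) := by
    rw [hh]
    rw [iteratedDeriv_comp_add_const n gphi (-(ς/2))]
  have hsqrt : 1 ≤ Real.sqrt (2*Real.pi) := by
    rw [show (1:ℝ) = Real.sqrt 1 from (Real.sqrt_one).symm]
    exact Real.sqrt_le_sqrt (by nlinarith [Real.pi_gt_three])
  have hsp : 0 < Real.sqrt (2*Real.pi) := lt_of_lt_of_le one_pos hsqrt
  have hcpos : (0:ℝ) < c := by rw [hc]; positivity
  have hppos : (0:ℝ) < ς⁻¹ ^ n := by positivity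
  have hcalc : |c • (ς⁻¹ ^ n • iteratedDeriv n h (ς⁻¹ * x))|
      = c * ς⁻¹ ^ n * |iteratedDeriv n gphi (ς⁻¹ * x + -(ς/2))| := by
    rw [smul_eq_mul, smul_eq_mul, hshift, abs_mul, abs_mul, abs_of_pos hcpos,
      abs_of_pos hppos, mul_assoc]
  rw [hcalc]
  have hbound := hCb (ς⁻¹ * x + -(ς/2))
  have hpos : (0:ℝ) < c * ς⁻¹ ^ n := by rw [hc]; positivity
  calc c * ς⁻¹ ^ n * |iteratedDeriv n gphi (ς⁻¹ * x + -(ς/2))|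
      ≤ c * ς⁻¹ ^ n * C := mul_le_mul_of_nonneg_left hbound (le_of_lt hpos)
    _ ≤ (ς * 1)⁻¹ * ς⁻¹ ^ n * C := by
        apply mul_le_mul_of_nonneg_right _ (le_of_lt hC)
        apply mul_le_mul_of_nonneg_right _ (by positivity)
        rw [hc]
        apply inv_anti₀ (by positivity)
        exact mul_le_mul_of_nonneg_left hsqrt (le_of_lt hς)
    _ = C / ς^(n+1) := by
        rw [mul_one, div_eq_mul_inv, ← inv_pow]
        ring
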